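/- If X ~ ESBIII(c,k,ε) with c > 1, then E(X) = 2εk · B(1 - 1/c, 1/c + k). -/

import Mathlib

open Real
open MeasureTheory Set

set_option linter.unusedSectionVars false

lemma ofReal_integrand {a b : ℝ} {x : ℝ} (hx : 0 ≤ x) (hx1 : x ≤ 1) :
    ((x ^ (a-1) * (1-x) ^ (b-1) : ℝ) : ℂ)
      = (x:ℂ) ^ ((a:ℂ)-1) * (1-(x:ℂ)) ^ ((b:ℂ)-1) := by
  push_cast
  rw [Complex.ofReal_cpow hx, Complex.ofReal_cpow (by linarith)]
  push_cast
  ring_nf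

lemma betaReal_interval (a b : ℝ) :
    Complex.betaIntegral a b
      = ((∫ x in (0:ℝ)..1, x ^ (a-1) * (1-x) ^ (b-1) : ℝ) : ℂ) := by
  rw [Complex.betaIntegral, ← intervalIntegral.integral_ofReal]
  apply intervalIntegral.integral_congr
  intro x hx
  rw [uIcc_of_le (by norm_num)] at hx
  exact (ofReal_integrand hx.1 hx.2).symm

lemma betaReal_eq (a b : ℝ) (ha : 0 < a) (hb : 0 < b) :
    ∫ x in Ioo (0:ℝ) 1, x ^ (a-1) * (1-x) ^ (b-1)
      = Gamma a * Gamma b / Gamma (a+b) := by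
  have hC := Complex.Gamma_mul_Gamma_eq_betaIntegral (s := a) (t := b)
    (by simpa using ha) (by simpa using hb)
  rw [betaReal_interval] at hC
  have hI : ∫ x in (0:ℝ)..1, x ^ (a-1) * (1-x) ^ (b-1)
      = ∫ x in Ioo (0:ℝ) 1, x ^ (a-1) * (1-x) ^ (b-1) := by
    rw [intervalIntegral.integral_of_le (by norm_num), integral_Ioc_eq_integral_Ioo]
  rw [hI] at hC
  have h1 : Complex.Gamma a = (Real.Gamma a : ℂ) := Complex.Gamma_ofReal a
  have h2 : Complex.Gamma b = (Real.Gamma b : ℂ) := Complex.Gamma_ofReal b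
  have h3 : Complex.Gamma ((a:ℂ) + b) = (Real.Gamma (a+b) : ℂ) := by
    rw [← Complex.ofReal_add]; exact Complex.Gamma_ofReal _
  rw [h1, h2, h3, ← Complex.ofReal_mul, ← Complex.ofReal_mul] at hC
  have hR : Gamma a * Gamma b
      = Gamma (a+b) * ∫ x in Ioo (0:ℝ) 1, x ^ (a-1) * (1-x) ^ (b-1) :=
    mod_cast hC
  have hG : Gamma (a+b) ≠ 0 := (Gamma_pos_of_pos (by linarith)).ne'
  field_simp [hG] at hR ⊢
  linarith [hR]

lemma betaReal_integrable (a b : ℝ) (ha : 0 < a) (hb : 0 < b) :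
    IntegrableOn (fun x : ℝ => x ^ (a-1) * (1-x) ^ (b-1)) (Ioo 0 1) := by
  have h := Complex.betaIntegral_convergent (u := a) (v := b)
    (by simpa using ha) (by simpa using hb)
  have h2 : IntegrableOn (fun x : ℝ => (x:ℂ) ^ ((a:ℂ)-1) * (1-(x:ℂ)) ^ ((b:ℂ)-1))
      (Ioo 0 1) := by
    have := h.1
    rw [intervalIntegrable_iff_integrableOn_Ioo_of_le (by norm_num)] at h
    exact h
  have h3 : IntegrableOn (fun x : ℝ => ((x:ℂ) ^ ((a:ℂ)-1) * (1-(x:ℂ)) ^ ((b:ℂ)-1)).re)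
      (Ioo 0 1) := h2.re
  apply IntegrableOn.congr_fun h3 ?_ measurableSet_Ioo
  intro x hx
  have := ofReal_integrand (a := a) (b := b) hx.1.le hx.2.le
  simp [← this]

noncomputable def phi (c d : ℝ) (u : ℝ) : ℝ := d * (u ^ (-(1/c)) * (1-u) ^ (1/c))

noncomputable def phi' (c d : ℝ) (u : ℝ) : ℝ :=
  d * ((-(1/c)) * u ^ (-(1/c) - 1) * ((1-u) ^ (1/c)) +
    u ^ (-(1/c)) * (-1 * ((1/c) * (1-u) ^ (1/c - 1))))

section Phi
variable {c d : ℝ} (hc : 1 < c) (hd : 0 < d)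

lemma phi_hasDeriv {u : ℝ} (hu : u ∈ Ioo (0:ℝ) 1) :
    HasDerivAt (phi c d) (phi' c d u) u := by
  have h1 : HasDerivAt (fun u : ℝ => u ^ (-(1/c))) ((-(1/c)) * u ^ (-(1/c) - 1)) u :=
    Real.hasDerivAt_rpow_const (Or.inl hu.1.ne')
  have h0 : HasDerivAt (fun u : ℝ => 1 - u) (-1) u := by
    simpa using (hasDerivAt_id' u).const_sub (1:ℝ)
  have h2 : HasDerivAt (fun u : ℝ => (1-u) ^ (1/c)) (-1 * ((1/c) * (1-u) ^ (1/c - 1))) u := by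
    have := (Real.hasDerivAt_rpow_const (p := 1/c)
      (Or.inl (by linarith [hu.2] : (1:ℝ) - u ≠ 0))).comp u h0
    rw [mul_comm]
    exact this
  exact (h1.mul h2).const_mul d

include hc hd in
lemma phi'_abs {u : ℝ} (hu : u ∈ Ioo (0:ℝ) 1) :
    |phi' c d u| = (d/c) * (u ^ (-(1/c) - 1) * (1-u) ^ (1/c - 1)) := by
  obtain ⟨hu0, hu1⟩ := hu
  have h1u : (0:ℝ) < 1 - u := by linarith
  have hA : u ^ (-(1/c) - 1) * u = u ^ (-(1/c)) := by
    have := Real.rpow_add hu0 (-(1/c) - 1) 1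
    rw [Real.rpow_one] at this
    rw [← this]; ring_nf
  have hB : (1-u) ^ (1/c - 1) * (1-u) = (1-u) ^ (1/c) := by
    have := Real.rpow_add h1u (1/c - 1) 1
    rw [Real.rpow_one] at this
    rw [← this]; ring_nf
  have heq : phi' c d u = -((d/c) * (u ^ (-(1/c) - 1) * (1-u) ^ (1/c - 1))) := by
    unfold phi'
    rw [← hA, ← hB]
    field_simp
    ring
  rw [heq, abs_neg, abs_of_pos]
  have := Real.rpow_pos_of_pos hu0 (-(1/c) - 1)
  have := Real.rpow_pos_of_pos h1u (1/c - 1)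
  positivity

include hc hd in
lemma phi_image : phi c d '' Ioo 0 1 = Ioi 0 := by
  have hc0 : (0:ℝ) < c := by linarith
  apply Subset.antisymm
  · rintro x ⟨u, hu, rfl⟩
    have := Real.rpow_pos_of_pos hu.1 (-(1/c))
    have := Real.rpow_pos_of_pos (by linarith [hu.2] : (0:ℝ) < 1 - u) (1/c)
    exact mem_Ioi.2 (by unfold phi; positivity)
  · intro x hx
    rw [mem_Ioi] at hx
    set t := (x/d) ^ (-c) with ht
    have hxd : 0 < x / d := by positivity
    have htpos : 0 < t := Real.rpow_pos_of_pos hxd _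
    have h1t : (0:ℝ) < 1 + t := by linarith
    refine ⟨t / (1+t), ⟨by positivity, by rw [div_lt_one h1t]; linarith⟩, ?_⟩
    have h1u : 1 - t/(1+t) = (1+t)⁻¹ := by field_simp; ring
    unfold phi
    rw [h1u]
    have e1 : (t/(1+t)) ^ (-(1/c)) = t ^ (-(1/c)) / (1+t) ^ (-(1/c)) :=
      Real.div_rpow htpos.le h1t.le _
    have e2 : ((1+t):ℝ)⁻¹ ^ (1/c) = ((1+t) ^ (1/c))⁻¹ := Real.inv_rpow h1t.le _
    have e3 : ((1+t):ℝ) ^ (-(1/c)) = ((1+t) ^ (1/c))⁻¹ := Real.rpow_neg h1t.le _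
    have hX : ((1+t):ℝ) ^ (1/c) ≠ 0 := (Real.rpow_pos_of_pos h1t _).ne'
    have e4 : t ^ (-(1/c)) = x / d := by
      rw [ht, ← Real.rpow_mul hxd.le]
      have : -c * -(1/c) = 1 := by field_simp
      rw [this, Real.rpow_one]
    rw [e1, e2, e3, e4]
    field_simp

include hc hd in
lemma phi_inj : InjOn (phi c d) (Ioo 0 1) := by
  have hc0 : (0:ℝ) < c := by linarith
  have : StrictAntiOn (phi c d) (Ioo 0 1) := by
    intro u hu v hv huv
    unfold phi
    have h1 : v ^ (-(1/c)) < u ^ (-(1/c)) :=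
      Real.rpow_lt_rpow_of_neg hu.1 huv (neg_lt_zero.mpr (by positivity))
    have h2 : (1-v) ^ (1/c) < (1-u) ^ (1/c) :=
      Real.rpow_lt_rpow (by linarith [hv.2]) (by linarith) (by positivity)
    have hv1 : (0:ℝ) < v ^ (-(1/c)) := Real.rpow_pos_of_pos hv.1 _
    have hv2 : (0:ℝ) ≤ (1-v) ^ (1/c) :=
      (Real.rpow_pos_of_pos (by linarith [hv.2]) _).le
    have := mul_lt_mul'' h1 h2 hv1.le hv2
    exact (mul_lt_mul_iff_right₀ hd).2 this
  exact this.injOn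

end Phi

section Key
variable {c k d : ℝ} (hc : 1 < c) (hk : 0 < k) (hd : 0 < d)

include hc hk hd in
lemma key_eq {u : ℝ} (hu : u ∈ Ioo (0:ℝ) 1) :
    |phi' c d u| * (phi c d u *
      ((c*k/2) * (phi c d u / d) ^ (-(c+1)) * (1 + (phi c d u / d) ^ (-c)) ^ (-(k+1))))
    = d^2 * (k/2) * (u ^ ((1-1/c)-1) * (1-u) ^ ((k+1/c)-1)) := by
  obtain ⟨hu0, hu1⟩ := hu
  have hc0 : (0:ℝ) < c := by linarith
  have h1u : (0:ℝ) < 1 - u := by linarith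
  set y : ℝ := u ^ (-(1/c)) * (1-u) ^ (1/c) with hy
  have hy1 : (0:ℝ) < u ^ (-(1/c)) := Real.rpow_pos_of_pos hu0 _
  have hy2 : (0:ℝ) < (1-u) ^ (1/c) := Real.rpow_pos_of_pos h1u _
  have hy0 : (0:ℝ) < y := mul_pos hy1 hy2
  have hphiy : phi c d u / d = y := by unfold phi; rw [mul_div_cancel_left₀ _ hd.ne']
  have hyc : y ^ (-c) = u * (1-u)⁻¹ := by
    rw [hy, Real.mul_rpow hy1.le hy2.le, ← Real.rpow_mul hu0.le, ← Real.rpow_mul h1u.le,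
      show (-(1/c)) * (-c) = 1 by field_simp, show (1/c) * (-c) = -1 by field_simp,
      Real.rpow_one, Real.rpow_neg_one]
  have hyc1 : y ^ (-(c+1)) = (u * (1-u)⁻¹) * y⁻¹ := by
    rw [show (-(c+1)) = -c + (-1) by ring, Real.rpow_add hy0, Real.rpow_neg_one, hyc]
  have hsum : 1 + y ^ (-c) = (1-u)⁻¹ := by rw [hyc]; field_simp; ring
  have hpow : ((1-u):ℝ)⁻¹ ^ (-(k+1)) = (1-u) ^ (k+1) := by
    rw [Real.inv_rpow h1u.le, Real.rpow_neg h1u.le, inv_inv]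
  have p1 : u ^ (-(1/c) - 1) * u = u ^ (-(1/c)) := by
    have := Real.rpow_add hu0 (-(1/c) - 1) 1
    rw [Real.rpow_one] at this
    rw [← this]; ring_nf
  have p2 : (1-u) ^ (1/c - 1) * (1-u) ^ (k+1) * (1-u)⁻¹ = (1-u) ^ (k+1/c-1) := by
    rw [← Real.rpow_add h1u, ← Real.rpow_neg_one (1-u), ← Real.rpow_add h1u]
    ring_nf
  rw [phi'_abs hc hd ⟨hu0, hu1⟩, hphiy, hyc1, hsum, hpow,
    show phi c d u = d * y by unfold phi; rw [hy],
    show ((1-1/c)-1 : ℝ) = -(1/c) by ring, ← p1, ← p2]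
  field_simp

include hc hk hd in
lemma half_lemma :
    IntegrableOn (fun x : ℝ => x *
        ((c*k/2) * (x/d) ^ (-(c+1)) * (1 + (x/d) ^ (-c)) ^ (-(k+1)))) (Ioi 0) ∧
      ∫ x in Ioi (0:ℝ), x * ((c*k/2) * (x/d) ^ (-(c+1)) * (1 + (x/d) ^ (-c)) ^ (-(k+1)))
        = d^2 * (k/2) *
            (Gamma (1-1/c) * Gamma (k+1/c) / Gamma ((1-1/c)+(k+1/c))) := by
  have hc0 : (0:ℝ) < c := by linarith
  have ha : (0:ℝ) < 1-1/c := by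
    have : 1/c < 1 := by rw [div_lt_one hc0]; linarith
    linarith
  have hb : (0:ℝ) < k+1/c := by positivity
  have hderiv : ∀ u ∈ Ioo (0:ℝ) 1,
      HasDerivWithinAt (phi c d) (phi' c d u) (Ioo 0 1) u :=
    fun u hu => (phi_hasDeriv hu).hasDerivWithinAt
  have himg := phi_image hc hd
  have hinj := phi_inj hc hd
  set g : ℝ → ℝ := fun x => x *
      ((c*k/2) * (x/d) ^ (-(c+1)) * (1 + (x/d) ^ (-c)) ^ (-(k+1))) with hg
  have hkey : ∀ u ∈ Ioo (0:ℝ) 1,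
      |phi' c d u| • g (phi c d u)
        = d^2 * (k/2) * (u ^ ((1-1/c)-1) * (1-u) ^ ((k+1/c)-1)) := by
    intro u hu
    rw [smul_eq_mul, hg]
    exact key_eq hc hk hd hu
  constructor
  · rw [← himg, integrableOn_image_iff_integrableOn_abs_deriv_smul
      measurableSet_Ioo hderiv hinj]
    have hInt := (betaReal_integrable (1-1/c) (k+1/c) ha hb).const_mul (d^2 * (k/2))
    exact IntegrableOn.congr_fun hInt (fun u hu => (hkey u hu).symm) measurableSet_Ioo
  · rw [← himg, integral_image_eq_integral_abs_deriv_smul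
      measurableSet_Ioo hderiv hinj]
    rw [setIntegral_congr_fun measurableSet_Ioo hkey, integral_const_mul,
      betaReal_eq _ _ ha hb]
end Key

/-- sign function with sign(0) = 1, as in the paper. -/
noncomputable def sgn (x : ℝ) : ℝ := if x < 0 then -1 else 1

/-- ESBIII density. -/
noncomputable def esbiiiPdf (c k ε : ℝ) (x : ℝ) : ℝ :=
  (c * k / 2) * ((sgn x * x) / (1 + sgn x * ε)) ^ (-(c + 1)) *
    (1 + ((sgn x * x) / (1 + sgn x * ε)) ^ (-c)) ^ (-(k + 1))

/-- Expected value of the ESBIII distribution: E(X) = 2εk B(1-1/c, 1/c+k) for c > 1. -/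
theorem esbiii_mean (c k ε : ℝ) (hc : 1 < c) (hk : 0 < k)
    (hε : ε ∈ Set.Ioo (-1 : ℝ) 1) :
    ∫ x : ℝ, x * esbiiiPdf c k ε x =
      2 * ε * k *
        (Real.Gamma (1 - 1 / c) * Real.Gamma (1 / c + k) /
          Real.Gamma ((1 - 1 / c) + (1 / c + k))) := by
  obtain ⟨hε1, hε2⟩ := hε
  have hd1 : (0:ℝ) < 1 + ε := by linarith
  have hd2 : (0:ℝ) < 1 - ε := by linarith
  obtain ⟨hIntP, hValP⟩ := half_lemma (d := 1+ε) hc hk hd1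
  obtain ⟨hIntN, hValN⟩ := half_lemma (d := 1-ε) hc hk hd2
  set B : ℝ := Gamma (1-1/c) * Gamma (k+1/c) / Gamma ((1-1/c)+(k+1/c)) with hB
  have hposEq : EqOn (fun x : ℝ => x * esbiiiPdf c k ε x)
      (fun x : ℝ => x * ((c*k/2) * (x/(1+ε)) ^ (-(c+1)) *
        (1 + (x/(1+ε)) ^ (-c)) ^ (-(k+1)))) (Ioi 0) := by
    intro x hx
    have hx0 : ¬ x < 0 := not_lt.2 (le_of_lt hx)
    simp only [esbiiiPdf, sgn, if_neg hx0, one_mul]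
  have hIntPos : IntegrableOn (fun x : ℝ => x * esbiiiPdf c k ε x) (Ioi 0) :=
    IntegrableOn.congr_fun hIntP hposEq.symm measurableSet_Ioi
  have hPosVal : ∫ x in Ioi (0:ℝ), x * esbiiiPdf c k ε x = (1+ε)^2*(k/2)*B := by
    rw [setIntegral_congr_fun measurableSet_Ioi hposEq]
    exact hValP
  have hnegEq : EqOn (fun x : ℝ => (-x) * esbiiiPdf c k ε (-x))
      (fun x : ℝ => -(x * ((c*k/2) * (x/(1-ε)) ^ (-(c+1)) *
        (1 + (x/(1-ε)) ^ (-c)) ^ (-(k+1))))) (Ioi 0) := by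
    intro x hx
    have hx0 : (-x) < 0 := neg_lt_zero.2 hx
    simp only [esbiiiPdf, sgn, if_pos hx0]
    rw [show ((-1:ℝ)) * -x = x by ring, show (1:ℝ) + (-1)*ε = 1 - ε by ring]
    ring
  have hIic : ∫ x in Iic (0:ℝ), x * esbiiiPdf c k ε x = -((1-ε)^2*(k/2)*B) := by
    have h0 := integral_comp_neg_Ioi 0 (fun x : ℝ => x * esbiiiPdf c k ε x)
    rw [neg_zero] at h0
    rw [← h0]
    calc ∫ x in Ioi (0:ℝ), (-x) * esbiiiPdf c k ε (-x)
        = ∫ x in Ioi (0:ℝ), -(x * ((c*k/2) * (x/(1-ε)) ^ (-(c+1)) *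
            (1 + (x/(1-ε)) ^ (-c)) ^ (-(k+1)))) :=
          setIntegral_congr_fun measurableSet_Ioi hnegEq
      _ = -((1-ε)^2*(k/2)*B) := by rw [integral_neg, hValN]
  have himgneg : (fun x : ℝ => -x) '' Ici 0 = Iic 0 := by
    ext x
    simp only [mem_image, mem_Ici, mem_Iic]
    constructor
    · rintro ⟨y, hy, rfl⟩; linarith
    · intro hx; exact ⟨-x, by linarith, by ring⟩
  have hIntIic : IntegrableOn (fun x : ℝ => x * esbiiiPdf c k ε x) (Iic 0) := by
    rw [← himgneg, integrableOn_image_iff_integrableOn_abs_deriv_smul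
      measurableSet_Ici (fun x _ => (hasDerivAt_neg x).hasDerivWithinAt)
      (neg_injective.injOn)]
    simp only [abs_neg, abs_one, one_smul]
    rw [integrableOn_Ici_iff_integrableOn_Ioi]
    exact IntegrableOn.congr_fun hIntN.neg hnegEq.symm measurableSet_Ioi
  rw [← intervalIntegral.integral_Iic_add_Ioi hIntIic hIntPos, hIic, hPosVal, hB,
    add_comm (1/c) k]
  ring
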